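/- Let $1 < q \le 2$, let $(\phi_i)_{i\in\mathbb{N}}$ be an orthonormal basis of a Hilbert space $U$, $w_i \ge w_{\min} > 0$, and $\mathcal{R}_q(u) = \sum_i w_i|\langle\phi_i,u\rangle|^q$. Then there exists a constant $c_q > 0$ depending only on $q$ (and $w_{\min}$ as $c_q = d_q w_{\min}^2$) such that for all $u, \tilde u \in \operatorname{dom}(\mathcal{R}_q)$ with $\sum_i w_i^2 |\langle\phi_i,u\rangle|^{2(q-1)} < \infty$: $\mathcal{R}_q(\tilde u) - \mathcal{R}_q(u) - \langle \partial\mathcal{R}_q(u), \tilde u - u\rangle \ge \dfrac{c_q \|\tilde u - u\|^2}{3w_{\min} + 2\mathcal{R}_q(u) + \mathcal{R}_q(\tilde u)}$, where $\partial\mathcal{R}_q(u) = \sum_i q\, w_i |\langle\phi_i,u\rangle|^{q-1}\operatorname{sgn}(\langle\phi_i,u\rangle)\phi_i$. -/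

import Mathlib

open scoped InnerProductSpace

set_option linter.unusedSectionVars false

private theorem hda (q : ℝ) (hq1 : 1 < q) (x : ℝ) :
    HasDerivAt (fun t : ℝ => |t| ^ q) (q * |x| ^ (q - 1) * Real.sign x) x := by
  rcases eq_or_ne x 0 with rfl | hx
  · rw [hasDerivAt_iff_tendsto_slope]
    simp only [Real.sign_zero, mul_zero]
    apply squeeze_zero_norm (a := fun t => |t| ^ (q - 1))
    · intro t
      rcases eq_or_ne t 0 with rfl | ht
      · simp [slope]
        positivity
      · rw [slope_def_field]
        simp only [abs_zero, Real.zero_rpow (by linarith : q ≠ 0), sub_zero, zero_sub]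
        rw [div_eq_mul_inv, norm_mul, norm_inv]
        rw [Real.norm_eq_abs, Real.norm_eq_abs, Real.abs_rpow_of_nonneg (abs_nonneg t), abs_abs]
        rw [← Real.rpow_neg_one |t|, ← Real.rpow_add (abs_pos.2 ht)]
        norm_num [sub_eq_add_neg]
    · have h0 : ContinuousAt (fun t : ℝ => |t| ^ (q - 1)) 0 :=
        ((Real.continuousAt_rpow_const _ _ (Or.inr (by linarith))).comp
          continuous_abs.continuousAt)
      have := h0.tendsto
      simpa [Real.zero_rpow (by linarith : q - 1 ≠ 0)] using this.mono_left nhdsWithin_le_nhds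
  · have h1 : HasDerivAt (fun y : ℝ => y ^ q) (q * |x| ^ (q - 1)) |x| := by
      have := Real.hasDerivAt_rpow_const (x := |x|) (p := q) (Or.inl (abs_ne_zero.2 hx))
      convert this using 1
    have h2 : HasDerivAt (fun t : ℝ => |t|) (Real.sign x) x := by
      have := hasDerivAt_abs hx
      convert this using 1
      rcases lt_or_gt_of_ne hx with h | h
      · simp [Real.sign_of_neg h, sign_neg h]
      · simp [Real.sign_of_pos h, sign_pos h]
    have := h1.comp x h2
    exact this


section Scalar
variable {q : ℝ} (hq1 : 1 < q) (hq2 : q ≤ 2) {R : ℝ} (hR : 0 < R)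

private noncomputable def ψ (q R t : ℝ) : ℝ := q * t ^ (q - 1) - q * (q - 1) * R ^ (q - 2) * t
private noncomputable def φ (q R t : ℝ) : ℝ :=
  q * |t| ^ (q - 1) * Real.sign t - q * (q - 1) * R ^ (q - 2) * t

include hq1 hq2 hR

lemma psi_mono : MonotoneOn (ψ q R) (Set.Icc 0 R) := by
  apply monotoneOn_of_hasDerivWithinAt_nonneg (f' := fun t => q * ((q - 1) * t ^ (q - 2)) - q * (q - 1) * R ^ (q - 2)) (convex_Icc 0 R)
  · exact ((continuous_const.mul (Real.continuous_rpow_const (by linarith : (0:ℝ) ≤ q - 1))).sub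
      (continuous_const.mul continuous_id')).continuousOn
  · intro t ht
    rw [interior_Icc] at ht
    have h1 : HasDerivAt (fun t : ℝ => t ^ (q - 1)) ((q - 1) * t ^ (q - 1 - 1)) t :=
      Real.hasDerivAt_rpow_const (Or.inl (ne_of_gt ht.1))
    have : HasDerivAt (ψ q R) (q * ((q - 1) * t ^ (q - 2)) - q * (q - 1) * R ^ (q - 2)) t := by
      have := ((h1.const_mul q).sub ((hasDerivAt_id t).const_mul (q * (q - 1) * R ^ (q - 2))))
      rw [show q - 1 - 1 = q - 2 by ring, mul_one] at this; exact this
    exact this.hasDerivWithinAt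
  · intro t ht
    rw [interior_Icc] at ht
    have : R ^ (q - 2) ≤ t ^ (q - 2) :=
      Real.rpow_le_rpow_of_nonpos ht.1 ht.2.le (by linarith)
    nlinarith [mul_le_mul_of_nonneg_left this (show (0:ℝ) ≤ q * (q - 1) by nlinarith)]

lemma psi_nonneg : ∀ t ∈ Set.Icc (0:ℝ) R, 0 ≤ ψ q R t := by
  intro t ht
  rcases eq_or_lt_of_le ht.1 with rfl | htpos
  · simp [ψ, Real.zero_rpow (by linarith : q - 1 ≠ 0)]
  · have h1 : R ^ (q - 2) * t ≤ t ^ (q - 1) := by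
      have : R ^ (q - 2) ≤ t ^ (q - 2) :=
        Real.rpow_le_rpow_of_nonpos htpos ht.2 (by linarith)
      calc R ^ (q - 2) * t ≤ t ^ (q - 2) * t := by nlinarith
        _ = t ^ (q - 1) := by
          rw [← Real.rpow_add_one (ne_of_gt htpos)]
          ring_nf
    have hq0 : (0:ℝ) < q := by linarith
    have hRq : 0 < R ^ (q - 2) := Real.rpow_pos_of_pos hR _
    simp only [ψ, sub_nonneg]
    have hX : 0 ≤ R ^ (q - 2) * t := mul_nonneg hRq.le ht.1
    calc q * (q - 1) * R ^ (q - 2) * t ≤ q * 1 * (R ^ (q - 2) * t) := by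
          nlinarith [mul_nonneg (mul_nonneg hq0.le hX) (show (0:ℝ) ≤ 2 - q by linarith)]
      _ ≤ q * t ^ (q - 1) := by
          rw [mul_one]
          exact mul_le_mul_of_nonneg_left h1 hq0.le

lemma phi_eq_psi : ∀ t : ℝ, 0 ≤ t → φ q R t = ψ q R t := by
  intro t ht
  rcases eq_or_lt_of_le ht with rfl | htpos
  · simp [φ, ψ, Real.zero_rpow (by linarith : q - 1 ≠ 0)]
  · simp [φ, ψ, abs_of_pos htpos, Real.sign_of_pos htpos]

lemma phi_neg : ∀ t : ℝ, φ q R (-t) = -φ q R t := by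
  intro t
  simp [φ, Real.sign_neg]
  ring

lemma phi_mono : MonotoneOn (φ q R) (Set.Icc (-R) R) := by
  intro x hx y hy hxy
  have hpm := psi_mono hq1 hq2 hR
  have hpn := psi_nonneg hq1 hq2 hR
  have hep := phi_eq_psi hq1 hq2 hR
  have hen := phi_neg hq1 hq2 hR
  rcases le_or_gt 0 x with h0x | hx0
  · rw [hep x h0x, hep y (le_trans h0x hxy)]
    exact hpm ⟨h0x, hx.2⟩ ⟨le_trans h0x hxy, hy.2⟩ hxy
  · have hxe : φ q R x = -ψ q R (-x) := by
      have h := hen (-x); rw [neg_neg] at h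
      rw [h, hep _ (by linarith : (0:ℝ) ≤ -x)]
    rcases le_or_gt 0 y with h0y | hy0
    · rw [hxe, hep y h0y]
      have h1 : 0 ≤ ψ q R (-x) := hpn _ ⟨by linarith, by linarith [hx.1]⟩
      have h2 : 0 ≤ ψ q R y := hpn _ ⟨h0y, hy.2⟩
      linarith
    · have hye : φ q R y = -ψ q R (-y) := by
        have h := hen (-y); rw [neg_neg] at h
        rw [h, hep _ (by linarith : (0:ℝ) ≤ -y)]
      rw [hxe, hye]
      have := hpm (Set.mem_Icc.2 ⟨by linarith, by linarith [hx.1]⟩)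
        (Set.mem_Icc.2 ⟨by linarith, by linarith [hx.1]⟩) (by linarith : -y ≤ -x)
      linarith

end Scalar


private theorem scalar_bregman {q : ℝ} (hq1 : 1 < q) (hq2 : q ≤ 2) {R : ℝ} (hR : 0 < R)
    (a c : ℝ) (ha : |a| ≤ R) (hc : |c| ≤ R) :
    q * (q - 1) * R ^ (q - 2) / 2 * (c - a) ^ 2
      ≤ |c| ^ q - |a| ^ q - q * |a| ^ (q - 1) * Real.sign a * (c - a) := by
  set m := q * (q - 1) * R ^ (q - 2) with hm
  set h : ℝ → ℝ := fun t => |t| ^ q - m / 2 * t ^ 2 - φ q R a * t with hh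
  have hd : ∀ t : ℝ, HasDerivAt h (φ q R t - φ q R a) t := by
    intro t
    have h1 := (hda q hq1 t).sub
      (((hasDerivAt_pow 2 t).const_mul (m / 2)).add ((hasDerivAt_id t).const_mul (φ q R a)))
    have : h = fun t => |t| ^ q - (m / 2 * t ^ 2 + φ q R a * t) := by
      funext t; simp [hh]; ring
    rw [this]
    refine h1.congr_deriv ?_
    simp [φ, hm]
    ring
  have haR : a ∈ Set.Icc (-R) R := by rw [Set.mem_Icc, ← abs_le]; exact ha
  have hcR : c ∈ Set.Icc (-R) R := by rw [Set.mem_Icc, ← abs_le]; exact hc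
  have key : h a ≤ h c := by
    rcases le_total a c with hac | hca
    · have : MonotoneOn h (Set.Icc a R) := by
        apply monotoneOn_of_hasDerivWithinAt_nonneg (f' := fun t => φ q R t - φ q R a)
          (convex_Icc a R) (fun t _ => (hd t).continuousAt.continuousWithinAt)
          (fun x hx => (hd x).hasDerivWithinAt)
        intro x hx
        rw [interior_Icc] at hx
        have hxm : x ∈ Set.Icc (-R) R := ⟨by linarith [haR.1, hx.1.le], hx.2.le⟩
        have := phi_mono hq1 hq2 hR haR hxm hx.1.le
        linarith
      exact this ⟨le_refl a, haR.2⟩ ⟨hac, hcR.2⟩ hac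
    · have : AntitoneOn h (Set.Icc (-R) a) := by
        apply antitoneOn_of_hasDerivWithinAt_nonpos (f' := fun t => φ q R t - φ q R a)
          (convex_Icc (-R) a) (fun t _ => (hd t).continuousAt.continuousWithinAt)
          (fun x hx => (hd x).hasDerivWithinAt)
        intro x hx
        rw [interior_Icc] at hx
        have hxm : x ∈ Set.Icc (-R) R := ⟨hx.1.le, by linarith [haR.2, hx.2.le]⟩
        have := phi_mono hq1 hq2 hR hxm haR hx.2.le
        linarith
      exact this ⟨hcR.1, hca⟩ ⟨haR.1, le_refl a⟩ hca
  have hφa : φ q R a = q * |a| ^ (q - 1) * Real.sign a - m * a := rfl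
  simp only [hh] at key
  rw [hφa] at key
  nlinarith [key]


private theorem scalar_key {q : ℝ} (hq1 : 1 < q) (hq2 : q ≤ 2) (a c : ℝ) :
    q * (q - 1) / 2 * (c - a) ^ 2 / (1 + |a| ^ q + |c| ^ q)
      ≤ |c| ^ q - |a| ^ q - q * |a| ^ (q - 1) * Real.sign a * (c - a) := by
  set R : ℝ := max 1 (max |a| |c|) with hRdef
  have hR1 : (1:ℝ) ≤ R := le_max_left _ _
  have hR : (0:ℝ) < R := lt_of_lt_of_le one_pos hR1
  have ha : |a| ≤ R := le_trans (le_max_left _ _) (le_max_right _ _)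
  have hc : |c| ≤ R := le_trans (le_max_right _ _) (le_max_right _ _)
  have haq : (0:ℝ) ≤ |a| ^ q := Real.rpow_nonneg (abs_nonneg a) q
  have hcq : (0:ℝ) ≤ |c| ^ q := Real.rpow_nonneg (abs_nonneg c) q
  have hbound : ∀ x : ℝ, |x| ≤ R → |x| ^ (2 - q) ≤ 1 + |a| ^ q + |c| ^ q → True := fun _ _ _ => trivial
  have habound : ∀ x : ℝ, |x| ^ (2 - q) ≤ 1 + |x| ^ q := by
    intro x
    rcases le_total |x| 1 with hle | hge
    · have := Real.rpow_le_one (abs_nonneg x) hle (by linarith : (0:ℝ) ≤ 2 - q)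
      have := Real.rpow_nonneg (abs_nonneg x) q
      linarith
    · have := Real.rpow_le_rpow_of_exponent_le hge (by linarith : 2 - q ≤ q)
      linarith
  have key : R ^ (2 - q) ≤ 1 + |a| ^ q + |c| ^ q := by
    rcases max_choice 1 (max |a| |c|) with h | h
    · rw [hRdef, h, Real.one_rpow]; linarith
    · rcases max_choice |a| |c| with h2 | h2
      · rw [hRdef, h, h2]; linarith [habound a]
      · rw [hRdef, h, h2]; linarith [habound c]
  have hS : (0:ℝ) < 1 + |a| ^ q + |c| ^ q := by linarith
  have hRq : R ^ (q - 2) = (R ^ (2 - q))⁻¹ := by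
    rw [← Real.rpow_neg hR.le]; ring_nf
  have h2q : (0:ℝ) < R ^ (2 - q) := Real.rpow_pos_of_pos hR _
  have hinv : (1 + |a| ^ q + |c| ^ q)⁻¹ ≤ R ^ (q - 2) := by
    rw [hRq]
    exact inv_anti₀ h2q key
  calc q * (q - 1) / 2 * (c - a) ^ 2 / (1 + |a| ^ q + |c| ^ q)
      = q * (q - 1) / 2 * (c - a) ^ 2 * (1 + |a| ^ q + |c| ^ q)⁻¹ := by ring
    _ ≤ q * (q - 1) / 2 * (c - a) ^ 2 * R ^ (q - 2) := by
        apply mul_le_mul_of_nonneg_left hinv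
        have : (0:ℝ) < q * (q - 1) := by nlinarith
        positivity
    _ = q * (q - 1) * R ^ (q - 2) / 2 * (c - a) ^ 2 := by ring
    _ ≤ _ := scalar_bregman hq1 hq2 hR a c ha hc



theorem bregman_lower_bound
    {U : Type*} [NormedAddCommGroup U] [InnerProductSpace ℝ U] [CompleteSpace U]
    (b : HilbertBasis ℕ ℝ U)
    (q : ℝ) (hq1 : 1 < q) (hq2 : q ≤ 2)
    (w : ℕ → ℝ) (wmin : ℝ) (hwmin : 0 < wmin) (hw : ∀ i, wmin ≤ w i) :
    ∃ c : ℝ, 0 < c ∧ ∀ (u ut : U) (ξ : U),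
      Summable (fun i => w i * |⟪b i, u⟫_ℝ| ^ q) →
      Summable (fun i => w i * |⟪b i, ut⟫_ℝ| ^ q) →
      Summable (fun i => (w i) ^ 2 * |⟪b i, u⟫_ℝ| ^ (2 * (q - 1))) →
      (∀ i, ⟪b i, ξ⟫_ℝ = q * w i * |⟪b i, u⟫_ℝ| ^ (q - 1) * Real.sign ⟪b i, u⟫_ℝ) →
      c * ‖ut - u‖ ^ 2 /
          (3 * wmin + 2 * (∑' i, w i * |⟪b i, u⟫_ℝ| ^ q) + ∑' i, w i * |⟪b i, ut⟫_ℝ| ^ q)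
        ≤ (∑' i, w i * |⟪b i, ut⟫_ℝ| ^ q) - (∑' i, w i * |⟪b i, u⟫_ℝ| ^ q)
          - ⟪ξ, ut - u⟫_ℝ := by
  have hq0 : (0:ℝ) < q := by linarith
  have hq1' : (0:ℝ) < q - 1 := by linarith
  refine ⟨q * (q - 1) / 2 * wmin ^ 2, by positivity, ?_⟩
  intro u ut ξ hsu hsut _hs3 hξ
  set c : ℝ := q * (q - 1) / 2 * wmin ^ 2 with hc
  set a : ℕ → ℝ := fun i => ⟪b i, u⟫_ℝ with ha
  set cc : ℕ → ℝ := fun i => ⟪b i, ut⟫_ℝ with hcc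
  set d : ℕ → ℝ := fun i => cc i - a i with hd
  set ξc : ℕ → ℝ := fun i => q * w i * |a i| ^ (q - 1) * Real.sign (a i) with hξc
  set R1 : ℝ := ∑' i, w i * |a i| ^ q with hR1
  set R2 : ℝ := ∑' i, w i * |cc i| ^ q with hR2
  set D : ℝ := 3 * wmin + 2 * R1 + R2 with hD
  have hw0 : ∀ i, 0 ≤ w i := fun i => le_trans hwmin.le (hw i)
  have htn : ∀ (v : ℕ → ℝ) i, (0:ℝ) ≤ w i * |v i| ^ q :=
    fun v i => mul_nonneg (hw0 i) (Real.rpow_nonneg (abs_nonneg _) q)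
  have hR1n : 0 ≤ R1 := tsum_nonneg (htn a)
  have hR2n : 0 ≤ R2 := tsum_nonneg (htn cc)
  have hDpos : 0 < D := by rw [hD]; linarith
  have hle1 : ∀ i, w i * |a i| ^ q ≤ R1 := fun i => Summable.le_tsum hsu i (fun j _ => htn a j)
  have hle2 : ∀ i, w i * |cc i| ^ q ≤ R2 := fun i => Summable.le_tsum hsut i (fun j _ => htn cc j)
  -- Parseval for the norm
  have hnorm : HasSum (fun i => d i ^ 2) (‖ut - u‖ ^ 2) := by
    have h0 := b.hasSum_inner_mul_inner (ut - u) (ut - u)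
    rw [real_inner_self_eq_norm_sq] at h0
    refine h0.congr_fun (fun i => ?_)
    rw [real_inner_comm]
    simp only [hd, ha, hcc, inner_sub_right]
    ring
  -- Parseval for the pairing with ξ
  have hxi : HasSum (fun i => ξc i * d i) ⟪ξ, ut - u⟫_ℝ := by
    have h0 := b.hasSum_inner_mul_inner ξ (ut - u)
    have hx : ∀ i, ⟪ξ, b i⟫_ℝ = ξc i := fun i => (real_inner_comm _ _).trans (hξ i)
    refine h0.congr_fun (fun i => ?_)
    rw [hx i]
    simp only [hd, ha, hcc, inner_sub_right]
  -- pointwise bound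
  have hpt : ∀ i, c / D * d i ^ 2 ≤ w i * |cc i| ^ q - w i * |a i| ^ q - ξc i * d i := by
    intro i
    set S : ℝ := 1 + |a i| ^ q + |cc i| ^ q with hS
    have hSpos : 0 < S := by
      have := Real.rpow_nonneg (abs_nonneg (a i)) q
      have := Real.rpow_nonneg (abs_nonneg (cc i)) q
      rw [hS]; linarith
    have hSD : wmin * S ≤ D := by
      have h1 : wmin * |a i| ^ q ≤ w i * |a i| ^ q :=
        mul_le_mul_of_nonneg_right (hw i) (Real.rpow_nonneg (abs_nonneg _) q)
      have h2 : wmin * |cc i| ^ q ≤ w i * |cc i| ^ q :=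
        mul_le_mul_of_nonneg_right (hw i) (Real.rpow_nonneg (abs_nonneg _) q)
      have := hle1 i; have := hle2 i
      rw [hS, hD]; nlinarith
    set B : ℝ := |cc i| ^ q - |a i| ^ q - q * |a i| ^ (q - 1) * Real.sign (a i) * (cc i - a i)
      with hB
    have hkey : q * (q - 1) / 2 * (d i) ^ 2 / S ≤ B := by
      have := scalar_key hq1 hq2 (a i) (cc i)
      rw [← hS] at this
      exact this
    have hA : 0 ≤ q * (q - 1) / 2 * (d i) ^ 2 := by positivity
    have hBn : 0 ≤ B := le_trans (div_nonneg hA hSpos.le) hkey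
    have key0 : wmin / D ≤ 1 / S := by
      rw [div_le_div_iff₀ hDpos hSpos]
      nlinarith [hSD]
    have step1 : c / D * d i ^ 2 ≤ wmin * (q * (q - 1) / 2 * (d i) ^ 2 / S) := by
      calc c / D * d i ^ 2 = wmin * (q * (q - 1) / 2 * d i ^ 2) * (wmin / D) := by
            rw [hc]; ring
        _ ≤ wmin * (q * (q - 1) / 2 * d i ^ 2) * (1 / S) :=
            mul_le_mul_of_nonneg_left key0 (mul_nonneg hwmin.le hA)
        _ = wmin * (q * (q - 1) / 2 * (d i) ^ 2 / S) := by ring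
    have step2 : wmin * (q * (q - 1) / 2 * (d i) ^ 2 / S) ≤ wmin * B :=
      mul_le_mul_of_nonneg_left hkey hwmin.le
    have step3 : wmin * B ≤ w i * B := mul_le_mul_of_nonneg_right (hw i) hBn
    have hfin : wmin * B ≤ w i * |cc i| ^ q - w i * |a i| ^ q - ξc i * d i := by
      have : w i * B = w i * |cc i| ^ q - w i * |a i| ^ q - ξc i * d i := by
        rw [hB, hξc, hd]; ring
      linarith [step3, this.le, this.ge]
    exact le_trans step1 (le_trans step2 hfin)
  -- summability
  have S3 : Summable (fun i => ξc i * d i) := hxi.summable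
  have SB : Summable (fun i => w i * |cc i| ^ q - w i * |a i| ^ q - ξc i * d i) :=
    (hsut.sub hsu).sub S3
  have Sd : Summable (fun i => d i ^ 2) := hnorm.summable
  have hsum := Summable.tsum_le_tsum hpt (Sd.mul_left (c / D)) SB
  have lhs_eq : ∑' i, c / D * d i ^ 2 = c * ‖ut - u‖ ^ 2 / D := by
    rw [tsum_mul_left, hnorm.tsum_eq, div_mul_eq_mul_div]
  have rhs_eq : (∑' i, (w i * |cc i| ^ q - w i * |a i| ^ q - ξc i * d i))
      = R2 - R1 - ⟪ξ, ut - u⟫_ℝ := by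
    rw [Summable.tsum_sub (hsut.sub hsu) S3, Summable.tsum_sub hsut hsu, hxi.tsum_eq]
  rw [lhs_eq, rhs_eq] at hsum
  exact hsum
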